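/- Let (Ω, ℱ, P) be a probability space, W an integrable real random variable (the untreated potential outcome), and T, D, D* : Ω → {0,1} binary random variables such that every event {D=d, D*=d', T=t} and every event {D*=d', T=t} (d, d', t ∈ {0,1}) has positive probability. Assume (i) P(D*=d' | D=d, T=t) = P(D*=d' | D=d) for all d, d', t ∈ {0,1}, and (ii) E[W | D=d, D*=d', T=1] − E[W | D=d, D*=d', T=0] = E[W | D*=d', T=1] − E[W | D*=d', T=0] for all d, d' ∈ {0,1}. Then (E[W | D=1, T=1] − E[W | D=1, T=0]) − (E[W | D=0, T=1] − E[W | D=0, T=0]) = (q₁ + q₀ − 1) · [(E[W | D*=1, T=1] − E[W | D*=1, T=0]) − (E[W | D*=0, T=1] − E[W | D*=0, T=0])], where q₁ := P(D*=1 | D=1) and q₀ := P(D*=0 | D=0). -/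

import Mathlib

open MeasureTheory ProbabilityTheory

/-- Conditional expectation of `Y` given the event `A`: `E[Y · 1_A] / P(A)`. -/
noncomputable def cexp {Ω : Type*} [MeasureSpace Ω] (Y : Ω → ℝ) (A : Set Ω) : ℝ :=
  (∫ ω in A, Y ω) / ((ℙ : Measure Ω) A).toReal

/-- Conditional probability of the event `A` given the event `B`: `P(A ∩ B) / P(B)`. -/
noncomputable def cprob {Ω : Type*} [MeasureSpace Ω] (A B : Set Ω) : ℝ :=
  ((ℙ : Measure Ω) (A ∩ B)).toReal / ((ℙ : Measure Ω) B).toReal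

lemma split_all {Ω : Type*} [MeasureSpace Ω] [IsProbabilityMeasure (ℙ : Measure Ω)]
    (W : Ω → ℝ) (hW : Integrable W) (A B1 B0 : Set Ω)
    (hA : MeasurableSet A) (hB1 : MeasurableSet B1) (hB0 : MeasurableSet B0)
    (hdisj : Disjoint B1 B0) (hcov : B1 ∪ B0 = Set.univ)
    (h1 : 0 < (ℙ : Measure Ω) (A ∩ B1)) (h0 : 0 < (ℙ : Measure Ω) (A ∩ B0)) :
    cexp W A = cprob B1 A * cexp W (A ∩ B1) + cprob B0 A * cexp W (A ∩ B0)
      ∧ cprob B1 A + cprob B0 A = 1 := by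
  have hAeq : A = (A ∩ B1) ∪ (A ∩ B0) := by
    rw [← Set.inter_union_distrib_left, hcov, Set.inter_univ]
  have hd : Disjoint (A ∩ B1) (A ∩ B0) :=
    hdisj.mono Set.inter_subset_right Set.inter_subset_right
  have hPa : (ℙ : Measure Ω) A = ℙ (A ∩ B1) + ℙ (A ∩ B0) := by
    conv_lhs => rw [hAeq]
    exact measure_union hd (hA.inter hB0)
  set a1 := ((ℙ : Measure Ω) (A ∩ B1)).toReal with ha1def
  set a0 := ((ℙ : Measure Ω) (A ∩ B0)).toReal with ha0def
  have ha1 : 0 < a1 := ENNReal.toReal_pos h1.ne' (measure_ne_top _ _)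
  have ha0 : 0 < a0 := ENNReal.toReal_pos h0.ne' (measure_ne_top _ _)
  have haP : ((ℙ : Measure Ω) A).toReal = a1 + a0 := by
    rw [hPa, ENNReal.toReal_add (measure_ne_top _ _) (measure_ne_top _ _)]
  have hInt : ∫ ω in A, W ω = (∫ ω in A ∩ B1, W ω) + ∫ ω in A ∩ B0, W ω := by
    conv_lhs => rw [hAeq]
    exact setIntegral_union hd (hA.inter hB0) hW.integrableOn hW.integrableOn
  have hc1 : cprob B1 A = a1 / (a1 + a0) := by
    simp only [cprob, Set.inter_comm B1 A, haP, ha1def]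
  have hc0 : cprob B0 A = a0 / (a1 + a0) := by
    simp only [cprob, Set.inter_comm B0 A, haP, ha0def]
  constructor
  · simp only [cexp, hInt, haP, hc1, hc0]
    rw [← ha1def, ← ha0def]
    field_simp
  · rw [hc1, hc0]
    field_simp

theorem trend_relation_repeated_cross_section
    {Ω : Type*} [MeasureSpace Ω] [IsProbabilityMeasure (ℙ : Measure Ω)]
    (W : Ω → ℝ) (T D Dstar : Ω → ℝ)
    (hW : Integrable W)
    (hTmeas : Measurable T) (hDmeas : Measurable D) (hDsmeas : Measurable Dstar)
    (hTbin : ∀ ω, T ω = 0 ∨ T ω = 1)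
    (hDbin : ∀ ω, D ω = 0 ∨ D ω = 1) (hDsbin : ∀ ω, Dstar ω = 0 ∨ Dstar ω = 1)
    (hpos : ∀ d d' t : ℝ, (d = 0 ∨ d = 1) → (d' = 0 ∨ d' = 1) → (t = 0 ∨ t = 1) →
      0 < (ℙ : Measure Ω) ({ω | D ω = d} ∩ {ω | Dstar ω = d'} ∩ {ω | T ω = t}))
    (hpos' : ∀ d' t : ℝ, (d' = 0 ∨ d' = 1) → (t = 0 ∨ t = 1) →
      0 < (ℙ : Measure Ω) ({ω | Dstar ω = d'} ∩ {ω | T ω = t}))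
    -- (i) no compositional changes: P(D* = d' | D = d, T = t) = P(D* = d' | D = d)
    (hcomp : ∀ d d' t : ℝ, (d = 0 ∨ d = 1) → (d' = 0 ∨ d' = 1) → (t = 0 ∨ t = 1) →
      cprob {ω | Dstar ω = d'} ({ω | D ω = d} ∩ {ω | T ω = t})
        = cprob {ω | Dstar ω = d'} {ω | D ω = d})
    -- (ii) non-differential misclassification in counterfactual trends
    (hnondiff : ∀ d d' : ℝ, (d = 0 ∨ d = 1) → (d' = 0 ∨ d' = 1) →
      cexp W ({ω | D ω = d} ∩ {ω | Dstar ω = d'} ∩ {ω | T ω = 1})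
        - cexp W ({ω | D ω = d} ∩ {ω | Dstar ω = d'} ∩ {ω | T ω = 0})
      = cexp W ({ω | Dstar ω = d'} ∩ {ω | T ω = 1})
        - cexp W ({ω | Dstar ω = d'} ∩ {ω | T ω = 0})) :
    (cexp W ({ω | D ω = 1} ∩ {ω | T ω = 1}) - cexp W ({ω | D ω = 1} ∩ {ω | T ω = 0}))
      - (cexp W ({ω | D ω = 0} ∩ {ω | T ω = 1}) - cexp W ({ω | D ω = 0} ∩ {ω | T ω = 0}))
    = (cprob {ω | Dstar ω = 1} {ω | D ω = 1} + cprob {ω | Dstar ω = 0} {ω | D ω = 0} - 1)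
      * ((cexp W ({ω | Dstar ω = 1} ∩ {ω | T ω = 1})
            - cexp W ({ω | Dstar ω = 1} ∩ {ω | T ω = 0}))
        - (cexp W ({ω | Dstar ω = 0} ∩ {ω | T ω = 1})
            - cexp W ({ω | Dstar ω = 0} ∩ {ω | T ω = 0}))) := by
  -- basic sets
  set B1 : Set Ω := {ω | Dstar ω = 1} with hB1def
  set B0 : Set Ω := {ω | Dstar ω = 0} with hB0def
  have hB1m : MeasurableSet B1 := hDsmeas (measurableSet_singleton 1)
  have hB0m : MeasurableSet B0 := hDsmeas (measurableSet_singleton 0)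
  have hdisj : Disjoint B1 B0 := by
    rw [Set.disjoint_iff_inter_eq_empty]
    ext ω; simp only [hB1def, hB0def, Set.mem_inter_iff, Set.mem_setOf_eq,
      Set.mem_empty_iff_false, iff_false]
    rintro ⟨h1, h0⟩; rw [h0] at h1; norm_num at h1
  have hcov : B1 ∪ B0 = Set.univ := by
    ext ω; simp only [hB1def, hB0def, Set.mem_union, Set.mem_setOf_eq, Set.mem_univ, iff_true]
    rcases hDsbin ω with h | h
    · exact Or.inr h
    · exact Or.inl h
  have hDm : ∀ d : ℝ, MeasurableSet {ω | D ω = d} := fun d => hDmeas (measurableSet_singleton d)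
  have hTm : ∀ t : ℝ, MeasurableSet {ω | T ω = t} := fun t => hTmeas (measurableSet_singleton t)
  -- split for A = {D = d} ∩ {T = t}
  have hrearr : ∀ d t d' : ℝ, ({ω | D ω = d} ∩ {ω | T ω = t}) ∩ {ω | Dstar ω = d'}
      = {ω | D ω = d} ∩ {ω | Dstar ω = d'} ∩ {ω | T ω = t} := fun d t d' =>
    Set.inter_right_comm _ _ _
  have key : ∀ d t : ℝ, (d = 0 ∨ d = 1) → (t = 0 ∨ t = 1) →
      cexp W ({ω | D ω = d} ∩ {ω | T ω = t})
        = cprob B1 {ω | D ω = d} * cexp W ({ω | D ω = d} ∩ B1 ∩ {ω | T ω = t})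
          + cprob B0 {ω | D ω = d} * cexp W ({ω | D ω = d} ∩ B0 ∩ {ω | T ω = t}) := by
    intro d t hd ht
    have h1 : 0 < (ℙ : Measure Ω) (({ω | D ω = d} ∩ {ω | T ω = t}) ∩ B1) := by
      rw [hrearr]; exact hpos d 1 t hd (Or.inr rfl) ht
    have h0 : 0 < (ℙ : Measure Ω) (({ω | D ω = d} ∩ {ω | T ω = t}) ∩ B0) := by
      rw [hrearr]; exact hpos d 0 t hd (Or.inl rfl) ht
    have := split_all W hW ({ω | D ω = d} ∩ {ω | T ω = t}) B1 B0
      ((hDm d).inter (hTm t)) hB1m hB0m hdisj hcov h1 h0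
    rw [this.1, hcomp d 1 t hd (Or.inr rfl) ht, hcomp d 0 t hd (Or.inl rfl) ht,
      hrearr, hrearr]
  -- sum-to-one for cprob given {D = d}
  have hsum : ∀ d : ℝ, (d = 0 ∨ d = 1) →
      cprob B1 {ω | D ω = d} + cprob B0 {ω | D ω = d} = 1 := by
    intro d hd
    have h1 : 0 < (ℙ : Measure Ω) ({ω | D ω = d} ∩ B1) :=
      lt_of_lt_of_le (hpos d 1 1 hd (Or.inr rfl) (Or.inr rfl))
        (measure_mono Set.inter_subset_left)
    have h0 : 0 < (ℙ : Measure Ω) ({ω | D ω = d} ∩ B0) :=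
      lt_of_lt_of_le (hpos d 0 1 hd (Or.inl rfl) (Or.inr rfl))
        (measure_mono Set.inter_subset_left)
    exact (split_all W hW {ω | D ω = d} B1 B0 (hDm d) hB1m hB0m hdisj hcov h1 h0).2
  -- trends
  set Δ1 := cexp W (B1 ∩ {ω | T ω = 1}) - cexp W (B1 ∩ {ω | T ω = 0}) with hΔ1
  set Δ0 := cexp W (B0 ∩ {ω | T ω = 1}) - cexp W (B0 ∩ {ω | T ω = 0}) with hΔ0
  set q1 := cprob B1 {ω | D ω = 1} with hq1
  set q0 := cprob B0 {ω | D ω = 0} with hq0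
  have trend : ∀ d : ℝ, (d = 0 ∨ d = 1) →
      cexp W ({ω | D ω = d} ∩ {ω | T ω = 1}) - cexp W ({ω | D ω = d} ∩ {ω | T ω = 0})
        = cprob B1 {ω | D ω = d} * Δ1 + cprob B0 {ω | D ω = d} * Δ0 := by
    intro d hd
    rw [key d 1 hd (Or.inr rfl), key d 0 hd (Or.inl rfl), hΔ1, hΔ0,
      ← hnondiff d 1 hd (Or.inr rfl), ← hnondiff d 0 hd (Or.inl rfl)]
    ring
  have h10 : cprob B0 {ω | D ω = 1} = 1 - q1 := by
    have := hsum 1 (Or.inr rfl); rw [← hq1] at this; linarith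
  have h01 : cprob B1 {ω | D ω = 0} = 1 - q0 := by
    have := hsum 0 (Or.inl rfl); rw [← hq0] at this; linarith
  rw [trend 1 (Or.inr rfl), trend 0 (Or.inl rfl), h10, h01]
  ring
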